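/- Let G be a connected finite simple graph with n vertices, n ≥ 3, and n ≡ 0 (mod 3). If there exist three distinct vertices u, v, w of G such that N_G(u) ∩ (N_G(v) ∪ N_G(w) ∪ {v, w}) = ∅, then G has a K_{1,2}-structure-cut. -/

import Mathlib

set_option linter.unusedSectionVars false
set_option maxHeartbeats 2000000

def SimpleGraph.IsK12Copy {V : Type*} [DecidableEq V] (G : SimpleGraph V)
    (s : Finset V) : Prop :=
  ∃ a b c : V, a ≠ b ∧ a ≠ c ∧ b ≠ c ∧ s = {a, b, c} ∧ G.Adj b a ∧ G.Adj b c

def SimpleGraph.IsK12StructureCut {V : Type*} [DecidableEq V] (G : SimpleGraph V)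
    (F : Finset (Finset V)) : Prop :=
  F.Nonempty ∧ (∀ s ∈ F, G.IsK12Copy s) ∧
    (F : Set (Finset V)).Pairwise Disjoint ∧
    (¬ (G.induce {v : V | ∀ s ∈ F, v ∉ s}).Preconnected ∨
      {v : V | ∀ s ∈ F, v ∉ s}.ncard = 1)

namespace K12Aux

open SimpleGraph

variable {V : Type*} [Fintype V] [DecidableEq V] (G : SimpleGraph V)

def remSet (F : Finset (Finset V)) : Set V := {x | ∀ s ∈ F, x ∉ s}

lemma mem_remSet {F : Finset (Finset V)} {x : V} : x ∈ remSet F ↔ ∀ s ∈ F, x ∉ s := Iff.rfl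

lemma remSet_union {F T : Finset (Finset V)} {x : V} :
    x ∈ remSet (F ∪ T) ↔ x ∈ remSet F ∧ ∀ s ∈ T, x ∉ s := by
  constructor
  · intro h
    exact ⟨fun s hs => h s (Finset.mem_union_left _ hs),
           fun s hs => h s (Finset.mem_union_right _ hs)⟩
  · rintro ⟨h1, h2⟩ s hs
    rcases Finset.mem_union.mp hs with h | h
    exacts [h1 s h, h2 s h]

lemma not_precon {R S : Set V} (hcl : ∀ x ∈ S, ∀ y ∈ R, G.Adj x y → y ∈ S)
    {a b : V} (haR : a ∈ R) (haS : a ∈ S) (hbR : b ∈ R) (hbS : b ∉ S) :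
    ¬ (G.induce R).Preconnected := by
  intro h
  obtain ⟨p⟩ := h ⟨a, haR⟩ ⟨b, hbR⟩
  suffices H : ∀ {x y : ↥R} (_ : (G.induce R).Walk x y), (x : V) ∈ S → (y : V) ∈ S from
    hbS (H p haS)
  intro x y q
  induction q with
  | nil => exact id
  | cons h q ih =>
      intro hx
      exact ih (hcl _ hx _ (Subtype.coe_prop _) h)

lemma mk_copy {a b c : V} (hab : a ≠ b) (hac : a ≠ c) (hbc : b ≠ c)
    (h1 : G.Adj b a) (h2 : G.Adj b c) : G.IsK12Copy ({a, b, c} : Finset V) :=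
  ⟨a, b, c, hab, hac, hbc, rfl, h1, h2⟩

lemma copy_card {s : Finset V} (h : G.IsK12Copy s) : s.card = 3 := by
  obtain ⟨a, b, c, hab, hac, hbc, rfl, -, -⟩ := h
  rw [Finset.card_insert_of_notMem (by simp [hab, hac]),
      Finset.card_insert_of_notMem (by simp [hbc]), Finset.card_singleton]

lemma mk_cut (F T : Finset (Finset V))
    (hcopF : ∀ s ∈ F, G.IsK12Copy s)
    (hdisjF : (↑F : Set (Finset V)).Pairwise Disjoint)
    (hcopT : ∀ s ∈ T, G.IsK12Copy s ∧ ∀ x ∈ s, x ∈ remSet F)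
    (hdisjT : (↑T : Set (Finset V)).Pairwise Disjoint)
    (hTne : T.Nonempty)
    (S : Set V) (a b : V) (haS : a ∈ S) (hbS : b ∉ S)
    (haR : a ∈ remSet (F ∪ T)) (hbR : b ∈ remSet (F ∪ T))
    (hcl : ∀ x ∈ S, ∀ y, y ∈ remSet (F ∪ T) → G.Adj x y → y ∈ S) :
    G.IsK12StructureCut (F ∪ T) := by
  refine ⟨⟨hTne.choose, Finset.mem_union_right _ hTne.choose_spec⟩, ?_, ?_, Or.inl ?_⟩
  · intro s hs
    rcases Finset.mem_union.mp hs with h | h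
    · exact hcopF s h
    · exact (hcopT s h).1
  · intro s hs t ht hst
    rw [Finset.coe_union, Set.mem_union] at hs ht
    have cross : ∀ s' ∈ F, ∀ t' ∈ T, Disjoint s' t' := by
      intro s' hs' t' ht'
      rw [Finset.disjoint_right]
      intro x hx
      exact ((hcopT t' ht').2 x hx) s' hs'
    rcases hs with hs | hs <;> rcases ht with ht | ht
    · exact hdisjF hs ht hst
    · exact cross _ (Finset.mem_coe.mp hs) _ (Finset.mem_coe.mp ht)
    · exact (cross _ (Finset.mem_coe.mp ht) _ (Finset.mem_coe.mp hs)).symm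
    · exact hdisjT hs ht hst
  · exact not_precon G hcl haR haS hbR hbS

lemma sep (F : Finset (Finset V)) (hcopF : ∀ s ∈ F, G.IsK12Copy s)
    (hdisjF : (↑F : Set (Finset V)).Pairwise Disjoint)
    {α β : V} (hαR : α ∈ remSet F) (hβR : β ∈ remSet F) (hαβ : α ≠ β)
    (hnadj : ¬ G.Adj α β)
    (hc : ∀ z, G.Adj α z → ¬ G.Adj β z)
    (K : Set V) (hKR : ∀ x ∈ K, x ∈ remSet F) (hKα : α ∉ K) (hKβ : β ∉ K)
    {x₀ : V} (hx₀ : x₀ ∈ K)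
    (hKcl : ∀ x ∈ K, ∀ y, y ∈ remSet F → G.Adj x y → y = α ∨ y ∈ K)
    (hpre : (G.induce (remSet F)).Preconnected) :
    ∃ F', G.IsK12StructureCut F' := by
  have hKne : ∀ z ∈ K, z ≠ α := fun z hz h => hKα (h ▸ hz)
  by_cases hone : ∃ p q : V, p ∈ remSet F ∧ G.Adj α p ∧ p ∉ K ∧
      q ∈ remSet F ∧ q ≠ α ∧ q ≠ β ∧ G.Adj p q
  · obtain ⟨p, q, hpR, hαp, hpK, hqR, hqα, hqβ, hpq⟩ := hone
    have hqK : q ∉ K := by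
      intro hqK
      rcases hKcl q hqK p hpR hpq.symm with h | h
      · exact G.irrefl (h ▸ hαp)
      · exact hpK h
    have hpβ : p ≠ β := by rintro rfl; exact hnadj hαp
    refine ⟨F ∪ {({α, p, q} : Finset V)},
      mk_cut G F _ hcopF hdisjF ?_ (by simp) ⟨_, Finset.mem_singleton_self _⟩
        K x₀ β hx₀ hKβ ?_ ?_ ?_⟩
    · intro s hs
      rw [Finset.mem_singleton] at hs
      subst hs
      refine ⟨mk_copy G hαp.ne (Ne.symm hqα) hpq.ne hαp.symm hpq, ?_⟩
      intro x hx
      rcases Finset.mem_insert.mp hx with rfl | hx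
      · exact hαR
      rcases Finset.mem_insert.mp hx with rfl | hx
      · exact hpR
      rw [Finset.mem_singleton] at hx
      exact hx ▸ hqR
    · rw [remSet_union]
      refine ⟨hKR x₀ hx₀, ?_⟩
      intro s hs
      rw [Finset.mem_singleton] at hs
      subst hs
      simp only [Finset.mem_insert, Finset.mem_singleton]
      push_neg
      exact ⟨hKne x₀ hx₀, fun h => hpK (h ▸ hx₀), fun h => hqK (h ▸ hx₀)⟩
    · rw [remSet_union]
      refine ⟨hβR, ?_⟩
      intro s hs
      rw [Finset.mem_singleton] at hs
      subst hs
      simp only [Finset.mem_insert, Finset.mem_singleton]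
      push_neg
      exact ⟨Ne.symm hαβ, Ne.symm hpβ, Ne.symm hqβ⟩
    · intro x hx y hyR hadj
      obtain ⟨hyF, hyT⟩ := remSet_union.mp hyR
      rcases hKcl x hx y hyF hadj with rfl | h
      · exact absurd (Finset.mem_insert_self _ _) (hyT _ (Finset.mem_singleton_self _))
      · exact h
  · by_cases htwo : ∃ p p' : V, p ∈ remSet F ∧ G.Adj α p ∧ p ∉ K ∧
        p' ∈ remSet F ∧ G.Adj α p' ∧ p' ∉ K ∧ p ≠ p'
    · obtain ⟨p, p', hpR, hαp, hpK, hp'R, hαp', hp'K, hpp'⟩ := htwo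
      have hpβ : p ≠ β := by rintro rfl; exact hnadj hαp
      have hp'β : p' ≠ β := by rintro rfl; exact hnadj hαp'
      refine ⟨F ∪ {({p, α, p'} : Finset V)},
        mk_cut G F _ hcopF hdisjF ?_ (by simp) ⟨_, Finset.mem_singleton_self _⟩
          K x₀ β hx₀ hKβ ?_ ?_ ?_⟩
      · intro s hs
        rw [Finset.mem_singleton] at hs
        subst hs
        refine ⟨mk_copy G hαp.ne' hpp' hαp'.ne hαp hαp', ?_⟩
        intro x hx
        rcases Finset.mem_insert.mp hx with rfl | hx
        · exact hpR
        rcases Finset.mem_insert.mp hx with rfl | hx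
        · exact hαR
        rw [Finset.mem_singleton] at hx
        exact hx ▸ hp'R
      · rw [remSet_union]
        refine ⟨hKR x₀ hx₀, ?_⟩
        intro s hs
        rw [Finset.mem_singleton] at hs
        subst hs
        simp only [Finset.mem_insert, Finset.mem_singleton]
        push_neg
        exact ⟨fun h => hpK (h ▸ hx₀), hKne x₀ hx₀, fun h => hp'K (h ▸ hx₀)⟩
      · rw [remSet_union]
        refine ⟨hβR, ?_⟩
        intro s hs
        rw [Finset.mem_singleton] at hs
        subst hs
        simp only [Finset.mem_insert, Finset.mem_singleton]
        push_neg
        exact ⟨Ne.symm hpβ, Ne.symm hαβ, Ne.symm hp'β⟩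
      · intro x hx y hyR hadj
        obtain ⟨hyF, hyT⟩ := remSet_union.mp hyR
        rcases hKcl x hx y hyF hadj with rfl | h
        · exact absurd (Finset.mem_insert_of_mem (Finset.mem_insert_self _ _))
            (hyT _ (Finset.mem_singleton_self _))
        · exact h
    · exfalso
      set P : Set V := {z | z ∈ remSet F ∧ G.Adj α z ∧ z ∉ K} with hP
      have hcl : ∀ x ∈ ({α} : Set V) ∪ K ∪ P, ∀ y ∈ remSet F, G.Adj x y →
          y ∈ ({α} : Set V) ∪ K ∪ P := by
        intro x hx y hyR hadj
        rcases hx with (hx | hx) | hx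
        · -- x = α
          rw [Set.mem_singleton_iff] at hx
          subst hx
          by_cases hyK : y ∈ K
          · exact Or.inl (Or.inr hyK)
          · exact Or.inr ⟨hyR, hadj, hyK⟩
        · -- x ∈ K
          rcases hKcl x hx y hyR hadj with rfl | h
          · exact Or.inl (Or.inl rfl)
          · exact Or.inl (Or.inr h)
        · -- x ∈ P
          obtain ⟨hxR, hαx, hxK⟩ := hx
          by_cases hyα : y = α
          · exact Or.inl (Or.inl hyα)
          by_cases hyK : y ∈ K
          · exfalso
            rcases hKcl y hyK x hxR hadj.symm with rfl | h
            · exact G.irrefl hαx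
            · exact hxK h
          by_cases hyβ : y = β
          · subst hyβ
            exact absurd hadj.symm (fun h => hc x hαx h)
          · exact absurd ⟨x, y, hxR, hαx, hxK, hyR, hyα, hyβ, hadj⟩ hone
      refine not_precon G hcl hαR (Or.inl (Or.inl rfl)) hβR ?_ hpre
      rintro ((h | h) | h)
      · exact hαβ h.symm
      · exact hKβ h
      · exact hnadj h.2.1
end K12Aux

open K12Aux

theorem card_mod_three_eq_zero_implies_K12_structure_cut {V : Type*} [Fintype V] [DecidableEq V]
    (G : SimpleGraph V) (hconn : G.Connected) (hn : 3 ≤ Fintype.card V)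
    (hmod : Fintype.card V % 3 = 0) (u v w : V)
    (huv : u ≠ v) (huw : u ≠ w) (hvw : v ≠ w)
    (hnbr : G.neighborSet u ∩ (G.neighborSet v ∪ G.neighborSet w ∪ {v, w}) = ∅) :
    ∃ F : Finset (Finset V), G.IsK12StructureCut F := by
  classical
  -- Step 0: unpack the neighborhood hypothesis
  have key : ∀ x, G.Adj u x → (G.Adj v x ∨ G.Adj w x ∨ x = v ∨ x = w) → False := by
    intro x hx hmem
    have hxmem : x ∈ G.neighborSet u ∩ (G.neighborSet v ∪ G.neighborSet w ∪ {v, w}) := by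
      refine ⟨hx, ?_⟩
      rcases hmem with h | h | h | h
      · exact Or.inl (Or.inl h)
      · exact Or.inl (Or.inr h)
      · exact Or.inr (by simp [h])
      · exact Or.inr (by simp [h])
    rw [hnbr] at hxmem
    exact hxmem
  have hcuv : ∀ z, G.Adj u z → ¬ G.Adj v z := fun z hz hv => key z hz (Or.inl hv)
  have hcuw : ∀ z, G.Adj u z → ¬ G.Adj w z := fun z hz hw => key z hz (Or.inr (Or.inl hw))
  have hauv : ¬ G.Adj u v := fun h => key v h (Or.inr (Or.inr (Or.inl rfl)))
  have hauw : ¬ G.Adj u w := fun h => key w h (Or.inr (Or.inr (Or.inr rfl)))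
  -- Step 1: maximal family avoiding u, v, w
  set Pg : Finset (Finset V) → Prop := fun F =>
    (∀ s ∈ F, G.IsK12Copy s ∧ u ∉ s ∧ v ∉ s ∧ w ∉ s) ∧
      (↑F : Set (Finset V)).Pairwise Disjoint with hPg
  obtain ⟨F₀, hF₀mem, hF₀max⟩ :=
    Finset.exists_max_image (Finset.univ.filter Pg) Finset.card
      ⟨∅, by simp [hPg]⟩
  have hF₀ : Pg F₀ := (Finset.mem_filter.mp hF₀mem).2
  have hcop₀ : ∀ s ∈ F₀, G.IsK12Copy s := fun s hs => (hF₀.1 s hs).1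
  have hdisj₀ : (↑F₀ : Set (Finset V)).Pairwise Disjoint := hF₀.2
  have huR : u ∈ remSet F₀ := fun s hs => (hF₀.1 s hs).2.1
  have hvR : v ∈ remSet F₀ := fun s hs => (hF₀.1 s hs).2.2.1
  have hwR : w ∈ remSet F₀ := fun s hs => (hF₀.1 s hs).2.2.2
  -- maximality
  have hmax : ∀ t : Finset V, G.IsK12Copy t → (∀ x ∈ t, x ∈ remSet F₀) →
      u ∉ t → v ∉ t → w ∉ t → False := by
    intro t hcopy hsub hu hv hw
    have htne : t.Nonempty := by
      obtain ⟨a, b, c, -, -, -, rfl, -, -⟩ := hcopy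
      exact ⟨a, Finset.mem_insert_self _ _⟩
    have htF₀ : t ∉ F₀ := by
      intro hmem
      obtain ⟨x, hx⟩ := htne
      exact (hsub x hx) t hmem hx
    have hg : Pg (insert t F₀) := by
      constructor
      · intro s hs
        rcases Finset.mem_insert.mp hs with rfl | hs
        · exact ⟨hcopy, hu, hv, hw⟩
        · exact hF₀.1 s hs
      · rw [Finset.coe_insert]
        refine Set.pairwise_insert_of_symm.mpr ⟨hdisj₀, ?_⟩
        intro s hs _
        rw [Finset.disjoint_left]
        intro x hx
        exact (hsub x hx) s (Finset.mem_coe.mp hs)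
    have := hF₀max (insert t F₀) (Finset.mem_filter.mpr ⟨Finset.mem_univ _, hg⟩)
    rw [Finset.card_insert_of_notMem htF₀] at this
    omega
  -- "max degree one" inside the remainder minus u,v,w
  have hmd1 : ∀ b p q : V, b ∈ remSet F₀ → p ∈ remSet F₀ → q ∈ remSet F₀ →
      b ≠ u → b ≠ v → b ≠ w → p ≠ u → p ≠ v → p ≠ w → q ≠ u → q ≠ v → q ≠ w →
      G.Adj b p → G.Adj b q → p = q := by
    intro b p q hbR hpR hqR hbu hbv hbw hpu hpv hpw hqu hqv hqw h1 h2
    by_contra hpq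
    refine hmax {p, b, q} (mk_copy G h1.ne' hpq h2.ne h1 h2) ?_ ?_ ?_ ?_
    · intro x hx
      rcases Finset.mem_insert.mp hx with rfl | hx
      · exact hpR
      rcases Finset.mem_insert.mp hx with rfl | hx
      · exact hbR
      rw [Finset.mem_singleton] at hx
      exact hx ▸ hqR
    · simp only [Finset.mem_insert, Finset.mem_singleton]
      push_neg
      exact ⟨Ne.symm hpu, Ne.symm hbu, Ne.symm hqu⟩
    · simp only [Finset.mem_insert, Finset.mem_singleton]
      push_neg
      exact ⟨Ne.symm hpv, Ne.symm hbv, Ne.symm hqv⟩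
    · simp only [Finset.mem_insert, Finset.mem_singleton]
      push_neg
      exact ⟨Ne.symm hpw, Ne.symm hbw, Ne.symm hqw⟩
  -- Step 2: is the remainder connected?
  by_cases hpre0 : (G.induce (remSet F₀)).Preconnected
  swap
  · rcases Finset.eq_empty_or_nonempty F₀ with rfl | hne
    · exfalso
      apply hpre0
      have hre : remSet (∅ : Finset (Finset V)) = Set.univ := by
        ext x; simp [remSet]
      rw [hre]
      have hmap : ∀ a b : V, G.Reachable a b →
          (G.induce (Set.univ : Set V)).Reachable ⟨a, trivial⟩ ⟨b, trivial⟩ := by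
        intro a b ⟨p⟩
        induction p with
        | nil => exact SimpleGraph.Reachable.refl _
        | cons h p ih =>
            refine SimpleGraph.Reachable.trans (SimpleGraph.Adj.reachable ?_) ih
            exact h
      intro x y
      have := hmap x y (hconn.preconnected x y)
      convert this <;> exact Subtype.ext rfl
    · exact ⟨F₀, hne, hcop₀, hdisj₀, Or.inl hpre0⟩
  -- Step 3: does there exist a copy through w avoiding u, v inside the remainder?
  by_cases htw : ∃ t : Finset V, G.IsK12Copy t ∧ (∀ x ∈ t, x ∈ remSet F₀) ∧
      w ∈ t ∧ u ∉ t ∧ v ∉ t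
  swap
  · -- Case 1a: no such copy; w's component is closed off; separate around v
    set K : Set V := {w} ∪ {z | z ∈ remSet F₀ ∧ z ≠ u ∧ z ≠ v ∧ G.Adj w z} with hK
    have hKR : ∀ x ∈ K, x ∈ remSet F₀ := by
      rintro x (rfl | hx)
      · exact hwR
      · exact hx.1
    have hKcl : ∀ x ∈ K, ∀ y, y ∈ remSet F₀ → G.Adj x y → y = v ∨ y ∈ K := by
      rintro x (rfl | hx) y hyR hadj
      · -- x = w
        by_cases hyv : y = v
        · exact Or.inl hyv
        by_cases hyu : y = u
        · exact absurd (hyu ▸ hadj).symm hauw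
        · exact Or.inr (Or.inr ⟨hyR, hyu, hyv, hadj⟩)
      · -- x adjacent to w
        obtain ⟨hxR, hxu, hxv, hwx⟩ := hx
        by_cases hyv : y = v
        · exact Or.inl hyv
        by_cases hyu : y = u
        · exact absurd hwx (hcuw x (hyu ▸ hadj).symm)
        by_cases hyw : y = w
        · exact Or.inr (Or.inl hyw)
        · exfalso
          refine htw ⟨{w, x, y}, mk_copy G hwx.ne (Ne.symm hyw) hadj.ne hwx.symm hadj, ?_, ?_, ?_, ?_⟩
          · intro z hz
            rcases Finset.mem_insert.mp hz with rfl | hz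
            · exact hwR
            rcases Finset.mem_insert.mp hz with rfl | hz
            · exact hxR
            rw [Finset.mem_singleton] at hz
            exact hz ▸ hyR
          · exact Finset.mem_insert_self _ _
          · simp only [Finset.mem_insert, Finset.mem_singleton]
            push_neg
            exact ⟨huw, Ne.symm hxu, Ne.symm hyu⟩
          · simp only [Finset.mem_insert, Finset.mem_singleton]
            push_neg
            exact ⟨hvw, Ne.symm hxv, Ne.symm hyv⟩
    refine sep G F₀ hcop₀ hdisj₀ hvR huR (Ne.symm huv) (fun h => hauv h.symm)
      (fun z hvz huz => hcuv z huz hvz) K hKR ?_ ?_ (Or.inl rfl) hKcl hpre0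
    · rintro (h | h)
      · exact hvw h
      · exact h.2.2.1 rfl
    · rintro (h | h)
      · exact huw h
      · exact h.2.1 rfl
  · -- Case 1b: there is a copy through w avoiding u,v
    obtain ⟨Tw, hTwcopy, hTwsub, hwTw, huTw, hvTw⟩ := htw
    -- canonicalize: Tw = {w, d, e} with  w~d  and (w~e or d~e)
    obtain ⟨d, e, hde, hdw, hew, hwd, hpat, hTwde⟩ :
        ∃ d e : V, d ≠ e ∧ d ≠ w ∧ e ≠ w ∧ G.Adj w d ∧ (G.Adj w e ∨ G.Adj d e) ∧
          Tw = {w, d, e} := by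
      obtain ⟨a, b, c, hab, hac, hbc, hTeq, hba, hbc'⟩ := hTwcopy
      rw [hTeq] at hwTw
      simp only [Finset.mem_insert, Finset.mem_singleton] at hwTw
      rcases hwTw with rfl | rfl | rfl
      · -- w = a
        exact ⟨b, c, hbc, Ne.symm hab, Ne.symm hac, hba.symm, Or.inr hbc', by rw [hTeq]⟩
      · -- w = b
        refine ⟨a, c, hac, hab, Ne.symm hbc, hba, Or.inl hbc', ?_⟩
        rw [hTeq]
        ext x
        simp only [Finset.mem_insert, Finset.mem_singleton]
        tauto
      · -- w = c
        refine ⟨b, a, Ne.symm hab, hbc, hac, hbc'.symm, Or.inr hba, ?_⟩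
        rw [hTeq]
        ext x
        simp only [Finset.mem_insert, Finset.mem_singleton]
        tauto
    have hdR : d ∈ remSet F₀ := hTwsub d (by rw [hTwde]; simp)
    have heR : e ∈ remSet F₀ := hTwsub e (by rw [hTwde]; simp)
    have hdu : d ≠ u := by rintro rfl; exact huTw (by rw [hTwde]; simp)
    have hdv : d ≠ v := by rintro rfl; exact hvTw (by rw [hTwde]; simp)
    have heu : e ≠ u := by rintro rfl; exact huTw (by rw [hTwde]; simp)
    have hev : e ≠ v := by rintro rfl; exact hvTw (by rw [hTwde]; simp)
    -- the extended family F₁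
    set F₁ : Finset (Finset V) := insert Tw F₀ with hF₁
    have hcop₁ : ∀ s ∈ F₁, G.IsK12Copy s := by
      intro s hs
      rcases Finset.mem_insert.mp hs with rfl | hs
      · exact hTwcopy
      · exact hcop₀ s hs
    have hdisj₁ : (↑F₁ : Set (Finset V)).Pairwise Disjoint := by
      rw [hF₁, Finset.coe_insert]
      refine Set.pairwise_insert_of_symm.mpr ⟨hdisj₀, ?_⟩
      intro s hs _
      rw [Finset.disjoint_left]
      intro x hx
      exact (hTwsub x hx) s (Finset.mem_coe.mp hs)
    have hmem₁ : ∀ x : V, x ∈ remSet F₁ ↔ x ∈ remSet F₀ ∧ x ≠ w ∧ x ≠ d ∧ x ≠ e := by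
      intro x
      constructor
      · intro h
        have hx0 : x ∈ remSet F₀ := fun s hs => h s (Finset.mem_insert_of_mem hs)
        have hxT : x ∉ Tw := h Tw (Finset.mem_insert_self _ _)
        rw [hTwde] at hxT
        simp only [Finset.mem_insert, Finset.mem_singleton] at hxT
        push_neg at hxT
        exact ⟨hx0, hxT.1, hxT.2.1, hxT.2.2⟩
      · rintro ⟨hx0, h1, h2, h3⟩ s hs
        rcases Finset.mem_insert.mp hs with rfl | hs
        · rw [hTwde]
          simp only [Finset.mem_insert, Finset.mem_singleton]
          push_neg
          exact ⟨h1, h2, h3⟩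
        · exact hx0 s hs
    have huR1 : u ∈ remSet F₁ := (hmem₁ u).mpr ⟨huR, huw, Ne.symm hdu, Ne.symm heu⟩
    have hvR1 : v ∈ remSet F₁ := (hmem₁ v).mpr ⟨hvR, hvw, Ne.symm hdv, Ne.symm hev⟩
    by_cases hpre1 : (G.induce (remSet F₁)).Preconnected
    swap
    · exact ⟨F₁, ⟨Tw, Finset.mem_insert_self _ _⟩, hcop₁, hdisj₁, Or.inl hpre1⟩
    -- Case 2b: a component of the F₁-remainder not attached to u
    by_cases hV : ∃ p₀, p₀ ∈ remSet F₁ ∧ p₀ ≠ u ∧ p₀ ≠ v ∧ ¬ G.Adj u p₀ ∧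
        ∀ z, z ∈ remSet F₁ → z ≠ u → z ≠ v → G.Adj p₀ z → ¬ G.Adj u z
    · obtain ⟨p₀, hp₀R, hp₀u, hp₀v, hp₀nu, hp₀cl⟩ := hV
      set K : Set V := {p₀} ∪ {z | z ∈ remSet F₁ ∧ z ≠ u ∧ z ≠ v ∧ G.Adj p₀ z} with hK
      have hKR : ∀ x ∈ K, x ∈ remSet F₁ := by
        rintro x (rfl | hx)
        · exact hp₀R
        · exact hx.1
      have hKcl : ∀ x ∈ K, ∀ y, y ∈ remSet F₁ → G.Adj x y → y = v ∨ y ∈ K := by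
        rintro x (rfl | hx) y hyR hadj
        · by_cases hyv : y = v
          · exact Or.inl hyv
          by_cases hyu : y = u
          · exact absurd (hyu ▸ hadj).symm hp₀nu
          · exact Or.inr (Or.inr ⟨hyR, hyu, hyv, hadj⟩)
        · obtain ⟨hxR, hxu, hxv, hpx⟩ := hx
          by_cases hyv : y = v
          · exact Or.inl hyv
          by_cases hyu : y = u
          · exact absurd (hyu ▸ hadj).symm (hp₀cl x hxR hxu hxv hpx)
          by_cases hyp : y = p₀
          · exact Or.inr (Or.inl hyp)
          · -- by md1 at x, y must be p₀
            exfalso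
            apply hyp
            have hxw : x ≠ w := ((hmem₁ x).mp hxR).2.1
            have hyw : y ≠ w := ((hmem₁ y).mp hyR).2.1
            have hpw : p₀ ≠ w := ((hmem₁ p₀).mp hp₀R).2.1
            exact hmd1 x y p₀ ((hmem₁ x).mp hxR).1 ((hmem₁ y).mp hyR).1
              ((hmem₁ p₀).mp hp₀R).1 hxu hxv hxw hyu hyv hyw hp₀u hp₀v hpw hadj hpx.symm
      refine sep G F₁ hcop₁ hdisj₁ hvR1 huR1 (Ne.symm huv) (fun h => hauv h.symm)
        (fun z hvz huz => hcuv z huz hvz) K hKR ?_ ?_ (Or.inl rfl) hKcl hpre1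
      · rintro (h | h)
        · exact hp₀v h.symm
        · exact h.2.2.1 rfl
      · rintro (h | h)
        · exact hp₀u h.symm
        · exact h.2.1 rfl
    by_cases hU : ∃ p₀, p₀ ∈ remSet F₁ ∧ p₀ ≠ u ∧ p₀ ≠ v ∧ ¬ G.Adj v p₀ ∧
        ∀ z, z ∈ remSet F₁ → z ≠ u → z ≠ v → G.Adj p₀ z → ¬ G.Adj v z
    · obtain ⟨p₀, hp₀R, hp₀u, hp₀v, hp₀nv, hp₀cl⟩ := hU
      set K : Set V := {p₀} ∪ {z | z ∈ remSet F₁ ∧ z ≠ u ∧ z ≠ v ∧ G.Adj p₀ z} with hK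
      have hKR : ∀ x ∈ K, x ∈ remSet F₁ := by
        rintro x (rfl | hx)
        · exact hp₀R
        · exact hx.1
      have hKcl : ∀ x ∈ K, ∀ y, y ∈ remSet F₁ → G.Adj x y → y = u ∨ y ∈ K := by
        rintro x (rfl | hx) y hyR hadj
        · by_cases hyu : y = u
          · exact Or.inl hyu
          by_cases hyv : y = v
          · exact absurd (hyv ▸ hadj).symm hp₀nv
          · exact Or.inr (Or.inr ⟨hyR, hyu, hyv, hadj⟩)
        · obtain ⟨hxR, hxu, hxv, hpx⟩ := hx
          by_cases hyu : y = u
          · exact Or.inl hyu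
          by_cases hyv : y = v
          · exact absurd (hyv ▸ hadj).symm (hp₀cl x hxR hxu hxv hpx)
          by_cases hyp : y = p₀
          · exact Or.inr (Or.inl hyp)
          · exfalso
            apply hyp
            have hxw : x ≠ w := ((hmem₁ x).mp hxR).2.1
            have hyw : y ≠ w := ((hmem₁ y).mp hyR).2.1
            have hpw : p₀ ≠ w := ((hmem₁ p₀).mp hp₀R).2.1
            exact hmd1 x y p₀ ((hmem₁ x).mp hxR).1 ((hmem₁ y).mp hyR).1
              ((hmem₁ p₀).mp hp₀R).1 hxu hxv hxw hyu hyv hyw hp₀u hp₀v hpw hadj hpx.symm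
      refine sep G F₁ hcop₁ hdisj₁ huR1 hvR1 huv hauv hcuv K hKR ?_ ?_ (Or.inl rfl) hKcl hpre1
      · rintro (h | h)
        · exact hp₀u h.symm
        · exact h.2.1 rfl
      · rintro (h | h)
        · exact hp₀v h.symm
        · exact h.2.2.1 rfl
    · -- Case 2d: theta structure
      push_neg at hV hU
      -- the remainder finsets
      set Rf : Finset V := Finset.univ.filter (fun z => z ∈ remSet F₀) with hRf
      set Qf : Finset V := Finset.univ.filter
        (fun z => z ∈ remSet F₀ ∧ z ≠ u ∧ z ≠ v ∧ z ≠ w ∧ z ≠ d ∧ z ≠ e) with hQf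
      have hQel : ∀ z ∈ Qf, z ∈ remSet F₀ ∧ z ≠ u ∧ z ≠ v ∧ z ≠ w ∧ z ≠ d ∧ z ≠ e :=
        fun z hz => (Finset.mem_filter.mp hz).2
      have hQin : ∀ z, z ∈ remSet F₀ → z ≠ u → z ≠ v → z ≠ w → z ≠ d → z ≠ e → z ∈ Qf :=
        fun z h1 h2 h3 h4 h5 h6 =>
          Finset.mem_filter.mpr ⟨Finset.mem_univ _, h1, h2, h3, h4, h5, h6⟩
      have hQR1 : ∀ z ∈ Qf, z ∈ remSet F₁ := by
        intro z hz
        obtain ⟨h1, -, -, h4, h5, h6⟩ := hQel z hz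
        exact (hmem₁ z).mpr ⟨h1, h4, h5, h6⟩
      have hQmk : ∀ z, z ∈ remSet F₁ → z ≠ u → z ≠ v → z ∈ Qf := by
        intro z hz h2 h3
        obtain ⟨h1, h4, h5, h6⟩ := (hmem₁ z).mp hz
        exact hQin z h1 h2 h3 h4 h5 h6
      -- theta facts
      have θ1 : ∀ p ∈ Qf, G.Adj u p ∨ G.Adj v p := by
        intro p hp
        by_contra hcon
        push_neg at hcon
        obtain ⟨hnu, hnv⟩ := hcon
        obtain ⟨hpR0, hpu, hpv, hpw, -, -⟩ := hQel p hp
        obtain ⟨zu, hzuR, hzu1, hzu2, hpzu, huzu⟩ := hV p (hQR1 p hp) hpu hpv hnu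
        obtain ⟨zv, hzvR, hzv1, hzv2, hpzv, hvzv⟩ := hU p (hQR1 p hp) hpu hpv hnv
        obtain ⟨hzuR0, hzuw, -, -⟩ := (hmem₁ zu).mp hzuR
        obtain ⟨hzvR0, hzvw, -, -⟩ := (hmem₁ zv).mp hzvR
        have hzz : zu = zv :=
          hmd1 p zu zv hpR0 hzuR0 hzvR0 hpu hpv hpw hzu1 hzu2 hzuw hzv1 hzv2 hzvw hpzu hpzv
        exact hcuv zu huzu (hzz ▸ hvzv)
      have θ2 : ∀ p ∈ Qf, G.Adj u p → ∃ q, q ∈ Qf ∧ G.Adj p q ∧ G.Adj v q := by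
        intro p hp hup
        obtain ⟨hpR0, hpu, hpv, hpw, -, -⟩ := hQel p hp
        obtain ⟨z, hzR, hz1, hz2, hpz, hvz⟩ := hU p (hQR1 p hp) hpu hpv (hcuv p hup)
        exact ⟨z, hQmk z hzR hz1 hz2, hpz, hvz⟩
      have θ2' : ∀ p ∈ Qf, ¬ G.Adj u p → ∃ q, q ∈ Qf ∧ G.Adj p q ∧ G.Adj u q := by
        intro p hp hnup
        obtain ⟨hpR0, hpu, hpv, hpw, -, -⟩ := hQel p hp
        obtain ⟨z, hzR, hz1, hz2, hpz, huz⟩ := hV p (hQR1 p hp) hpu hpv hnup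
        exact ⟨z, hQmk z hzR hz1 hz2, hpz, huz⟩
      have mdQ : ∀ b p q : V, b ∈ Qf → p ∈ Qf → q ∈ Qf → G.Adj b p → G.Adj b q → p = q := by
        intro b p q hb hp hq h1 h2
        obtain ⟨hbR, hbu, hbv, hbw, -, -⟩ := hQel b hb
        obtain ⟨hpR, hpu, hpv, hpw, -, -⟩ := hQel p hp
        obtain ⟨hqR, hqu, hqv, hqw, -, -⟩ := hQel q hq
        exact hmd1 b p q hbR hpR hqR hbu hbv hbw hpu hpv hpw hqu hqv hqw h1 h2
      -- cardinality facts
      have hud : u ≠ d := Ne.symm hdu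
      have hue' : u ≠ e := Ne.symm heu
      have hvd' : v ≠ d := Ne.symm hdv
      have hve' : v ≠ e := Ne.symm hev
      have hwd' : w ≠ d := Ne.symm hdw
      have hwe' : w ≠ e := Ne.symm hew
      have hq5sub : ({u, v, w, d, e} : Finset V) ⊆ Rf := by
        intro x hx
        rw [hRf, Finset.mem_filter]
        refine ⟨Finset.mem_univ _, ?_⟩
        simp only [Finset.mem_insert, Finset.mem_singleton] at hx
        rcases hx with rfl | rfl | rfl | rfl | rfl
        exacts [huR, hvR, hwR, hdR, heR]
      have hq5 : ({u, v, w, d, e} : Finset V).card = 5 := by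
        rw [Finset.card_insert_of_notMem (by simp [huv, huw, hud, hue']),
            Finset.card_insert_of_notMem (by simp [hvw, hvd', hve']),
            Finset.card_insert_of_notMem (by simp [hwd', hwe']),
            Finset.card_insert_of_notMem (by simp [hde]),
            Finset.card_singleton]
      have hQeq : Qf = Rf \ ({u, v, w, d, e} : Finset V) := by
        ext z
        simp only [hQf, hRf, Finset.mem_filter, Finset.mem_univ, true_and, Finset.mem_sdiff,
          Finset.mem_insert, Finset.mem_singleton]
        tauto
      have hcardV : Fintype.card V = 3 * F₀.card + Rf.card := by
        have hdisjBU : Disjoint (F₀.biUnion id) Rf := by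
          rw [Finset.disjoint_right]
          intro x hx hbu
          obtain ⟨s, hs, hxs⟩ := Finset.mem_biUnion.mp hbu
          exact ((Finset.mem_filter.mp hx).2) s hs hxs
        have huniv : (Finset.univ : Finset V) = F₀.biUnion id ∪ Rf := by
          ext x
          simp only [Finset.mem_univ, true_iff, Finset.mem_union, Finset.mem_biUnion, id_eq,
            hRf, Finset.mem_filter, true_and]
          by_cases h : x ∈ remSet F₀
          · exact Or.inr h
          · left
            rw [mem_remSet] at h
            push_neg at h
            obtain ⟨s, hs, hxs⟩ := h
            exact ⟨s, hs, hxs⟩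
        have hsum : ∑ s ∈ F₀, (id s).card = 3 * F₀.card := by
          simp only [id_eq]
          rw [Finset.sum_congr rfl (fun s hs => copy_card G (hcop₀ s hs)),
            Finset.sum_const, smul_eq_mul, mul_comm]
        have hbd : ∀ x ∈ F₀, ∀ y ∈ F₀, x ≠ y → Disjoint (id x) (id y) :=
          fun x hx y hy hxy => hdisj₀ (Finset.mem_coe.mpr hx) (Finset.mem_coe.mpr hy) hxy
        calc Fintype.card V = (Finset.univ : Finset V).card := (Finset.card_univ).symm
          _ = (F₀.biUnion id ∪ Rf).card := by rw [← huniv]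
          _ = (F₀.biUnion id).card + Rf.card := Finset.card_union_of_disjoint hdisjBU
          _ = 3 * F₀.card + Rf.card := by rw [Finset.card_biUnion hbd, hsum]
      have h5R : 5 ≤ Rf.card := hq5 ▸ Finset.card_le_card hq5sub
      have hQcard : Qf.card = Rf.card - 5 := by rw [hQeq, Finset.card_sdiff_of_subset hq5sub, hq5]
      have hQne1 : Qf.card ≠ 1 := by
        intro h1
        obtain ⟨p, hp⟩ := Finset.card_eq_one.mp h1
        have hpQ : p ∈ Qf := by rw [hp]; exact Finset.mem_singleton_self _
        have hsingle : ∀ q ∈ Qf, q = p := by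
          intro q hq; rw [hp] at hq; exact Finset.mem_singleton.mp hq
        rcases θ1 p hpQ with h | h
        · obtain ⟨q, hqQ, hpq, -⟩ := θ2 p hpQ h
          exact G.irrefl ((hsingle q hqQ) ▸ hpq)
        · obtain ⟨q, hqQ, hpq, -⟩ := θ2' p hpQ (fun hu => hcuv p hu h)
          exact G.irrefl ((hsingle q hqQ) ▸ hpq)
      have h4 : 4 ≤ Qf.card := by omega
      -- extract the two bridges x₁-y₁ and x₂-y₂
      obtain ⟨p₁, hp₁⟩ : Qf.Nonempty := Finset.card_pos.mp (by omega)
      obtain ⟨x₁, hx₁Q, hux₁⟩ : ∃ x, x ∈ Qf ∧ G.Adj u x := by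
        rcases θ1 p₁ hp₁ with h | h
        · exact ⟨p₁, hp₁, h⟩
        · obtain ⟨q, hq, -, huq⟩ := θ2' p₁ hp₁ (fun hu => hcuv _ hu h)
          exact ⟨q, hq, huq⟩
      obtain ⟨y₁, hy₁Q, hx₁y₁, hvy₁⟩ := θ2 x₁ hx₁Q hux₁
      obtain ⟨p₂, hp₂mem⟩ : (Qf \ ({x₁, y₁} : Finset V)).Nonempty := by
        rw [← Finset.card_pos]
        have h1 := Finset.card_sdiff_add_card_inter Qf ({x₁, y₁} : Finset V)
        have h2 : (Qf ∩ ({x₁, y₁} : Finset V)).card ≤ ({x₁, y₁} : Finset V).card :=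
          Finset.card_le_card Finset.inter_subset_right
        have h3 : ({x₁, y₁} : Finset V).card ≤ 2 := by
          refine le_trans (Finset.card_insert_le _ _) ?_
          simp
        omega
      obtain ⟨hp₂Q, hp₂ne⟩ := Finset.mem_sdiff.mp hp₂mem
      simp only [Finset.mem_insert, Finset.mem_singleton] at hp₂ne
      push_neg at hp₂ne
      obtain ⟨hp₂x₁, hp₂y₁⟩ := hp₂ne
      obtain ⟨x₂, hx₂Q, hux₂, hx₂x₁, hx₂y₁⟩ :
          ∃ x, x ∈ Qf ∧ G.Adj u x ∧ x ≠ x₁ ∧ x ≠ y₁ := by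
        rcases θ1 p₂ hp₂Q with h | h
        · exact ⟨p₂, hp₂Q, h, hp₂x₁, hp₂y₁⟩
        · obtain ⟨q, hqQ, hp₂q, huq⟩ := θ2' p₂ hp₂Q (fun hu => hcuv _ hu h)
          refine ⟨q, hqQ, huq, ?_, ?_⟩
          · intro h
            rw [h] at hp₂q
            exact hp₂y₁ (mdQ x₁ p₂ y₁ hx₁Q hp₂Q hy₁Q hp₂q.symm hx₁y₁)
          · intro h
            rw [h] at huq
            exact hcuv y₁ huq hvy₁
      obtain ⟨y₂, hy₂Q, hx₂y₂, hvy₂⟩ := θ2 x₂ hx₂Q hux₂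
      have hy₂x₁ : y₂ ≠ x₁ := by
        intro h
        rw [h] at hx₂y₂
        exact hx₂y₁ (mdQ x₁ x₂ y₁ hx₁Q hx₂Q hy₁Q hx₂y₂.symm hx₁y₁)
      have hy₂y₁ : y₂ ≠ y₁ := by
        intro h
        rw [h] at hx₂y₂
        exact hx₂x₁ (mdQ y₁ x₂ x₁ hy₁Q hx₂Q hx₁Q hx₂y₂.symm hx₁y₁.symm)
      have hy₁x₁ : y₁ ≠ x₁ := hx₁y₁.ne'
      have hy₁x₂ : y₁ ≠ x₂ := fun h => hcuv y₁ (by rw [h]; exact hux₂) hvy₁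
      have hy₂x₂ : y₂ ≠ x₂ := hx₂y₂.ne'
      have hx₁x₂ : x₁ ≠ x₂ := Ne.symm hx₂x₁
      have hnvx₁ : ¬ G.Adj v x₁ := hcuv x₁ hux₁
      have hnvx₂ : ¬ G.Adj v x₂ := hcuv x₂ hux₂
      have hnuy₁ : ¬ G.Adj u y₁ := fun h => hcuv y₁ h hvy₁
      have hnuy₂ : ¬ G.Adj u y₂ := fun h => hcuv y₂ h hvy₂
      obtain ⟨hx₁R, hx₁u, hx₁v, hx₁w, hx₁d, hx₁e⟩ := hQel x₁ hx₁Q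
      obtain ⟨hx₂R, hx₂u, hx₂v, hx₂w, hx₂d, hx₂e⟩ := hQel x₂ hx₂Q
      obtain ⟨hy₁R, hy₁u, hy₁v, hy₁w, hy₁d, hy₁e⟩ := hQel y₁ hy₁Q
      obtain ⟨hy₂R, hy₂u, hy₂v, hy₂w, hy₂d, hy₂e⟩ := hQel y₂ hy₂Q
      -- generic cut using two copies {x₁,u,x₂} and {v,m',w}
      have leafA : ∀ m' : V, m' ∈ remSet F₀ → G.IsK12Copy ({v, m', w} : Finset V) →
          m' ≠ u → m' ≠ x₁ → m' ≠ x₂ → ∀ xj yj : V, xj ∈ Qf → yj ∈ Qf → G.Adj u xj →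
          G.Adj xj yj → G.Adj v yj → xj ∈ ({x₁, u, x₂} : Finset V) → yj ≠ m' →
          ∃ F', G.IsK12StructureCut F' := by
        intro m' hm'R hcopy2 hm'u hm'x₁ hm'x₂ xj yj hxjQ hyjQ huxj hxjyj hvyj hxjt1 hyjm
        obtain ⟨hyjR, hyju, hyjv, hyjw, hyjd, hyje⟩ := hQel yj hyjQ
        obtain ⟨hxjR, hxju, hxjv, hxjw, hxjd, hxje⟩ := hQel xj hxjQ
        have hyjx₁ : yj ≠ x₁ := fun h => hnvx₁ (h ▸ hvyj)
        have hyjx₂ : yj ≠ x₂ := fun h => hnvx₂ (h ▸ hvyj)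
        obtain ⟨z, hzR, hzu, hzv, hzw, hzm, hzQ⟩ :
            ∃ z, z ∈ remSet F₀ ∧ z ≠ u ∧ z ≠ v ∧ z ≠ w ∧ z ≠ m' ∧ z ∉ Qf := by
          by_cases hdm : d = m'
          · refine ⟨e, heR, heu, hev, hew, ?_, ?_⟩
            · rw [← hdm]; exact Ne.symm hde
            · intro h; exact (hQel e h).2.2.2.2.2 rfl
          · exact ⟨d, hdR, hdu, hdv, hdw, hdm, fun h => (hQel d h).2.2.2.2.1 rfl⟩
        have hzyj : z ≠ yj := fun h => hzQ (h ▸ hyjQ)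
        have hzx₁ : z ≠ x₁ := fun h => hzQ (h ▸ hx₁Q)
        have hzx₂ : z ≠ x₂ := fun h => hzQ (h ▸ hx₂Q)
        have hd12 : Disjoint ({x₁, u, x₂} : Finset V) ({v, m', w} : Finset V) := by
          rw [Finset.disjoint_left]
          intro a ha ha'
          simp only [Finset.mem_insert, Finset.mem_singleton] at ha ha'
          rcases ha with rfl | rfl | rfl
          · rcases ha' with h | h | h
            exacts [hx₁v h, hm'x₁ h.symm, hx₁w h]
          · rcases ha' with h | h | h
            exacts [huv h, hm'u h.symm, huw h]
          · rcases ha' with h | h | h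
            exacts [hx₂v h, hm'x₂ h.symm, hx₂w h]
        refine ⟨F₀ ∪ {({x₁, u, x₂} : Finset V), ({v, m', w} : Finset V)},
          mk_cut G F₀ _ hcop₀ hdisj₀ ?_ ?_ ⟨_, Finset.mem_insert_self _ _⟩
            {yj} yj z rfl (by simp [hzyj]) ?_ ?_ ?_⟩
        · intro s hs
          rcases Finset.mem_insert.mp hs with rfl | hs
          · refine ⟨mk_copy G hx₁u hx₁x₂ (Ne.symm hx₂u) hux₁ hux₂, ?_⟩
            intro x hx
            rcases Finset.mem_insert.mp hx with rfl | hx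
            · exact hx₁R
            rcases Finset.mem_insert.mp hx with rfl | hx
            · exact huR
            rw [Finset.mem_singleton] at hx
            exact hx ▸ hx₂R
          · rw [Finset.mem_singleton] at hs
            subst hs
            refine ⟨hcopy2, ?_⟩
            intro x hx
            rcases Finset.mem_insert.mp hx with rfl | hx
            · exact hvR
            rcases Finset.mem_insert.mp hx with rfl | hx
            · exact hm'R
            rw [Finset.mem_singleton] at hx
            exact hx ▸ hwR
        · rw [Finset.coe_insert, Finset.coe_singleton]
          refine Set.pairwise_insert_of_symm.mpr
            ⟨Set.pairwise_singleton _ _, ?_⟩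
          intro b hb _
          rw [Set.mem_singleton_iff] at hb
          subst hb
          exact hd12
        · rw [remSet_union]
          refine ⟨hyjR, ?_⟩
          intro s hs
          rcases Finset.mem_insert.mp hs with rfl | hs
          · simp only [Finset.mem_insert, Finset.mem_singleton]
            push_neg
            exact ⟨hyjx₁, hyju, hyjx₂⟩
          · rw [Finset.mem_singleton] at hs
            subst hs
            simp only [Finset.mem_insert, Finset.mem_singleton]
            push_neg
            exact ⟨hyjv, hyjm, hyjw⟩
        · rw [remSet_union]
          refine ⟨hzR, ?_⟩
          intro s hs
          rcases Finset.mem_insert.mp hs with rfl | hs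
          · simp only [Finset.mem_insert, Finset.mem_singleton]
            push_neg
            exact ⟨hzx₁, hzu, hzx₂⟩
          · rw [Finset.mem_singleton] at hs
            subst hs
            simp only [Finset.mem_insert, Finset.mem_singleton]
            push_neg
            exact ⟨hzv, hzm, hzw⟩
        · intro x hx y hyR hadj
          rw [Set.mem_singleton_iff] at hx
          rw [hx] at hadj
          obtain ⟨hyF, hyT⟩ := remSet_union.mp hyR
          have hy1 : y ∉ ({x₁, u, x₂} : Finset V) := hyT _ (Finset.mem_insert_self _ _)
          have hy2 : y ∉ ({v, m', w} : Finset V) :=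
            hyT _ (Finset.mem_insert_of_mem (Finset.mem_singleton_self _))
          have hyu : y ≠ u := by rintro rfl; exact hy1 (by simp)
          have hyv : y ≠ v := by rintro rfl; exact hy2 (by simp)
          have hyw : y ≠ w := by rintro rfl; exact hy2 (by simp)
          have hyxj : y = xj := hmd1 yj y xj hyjR hyF hxjR hyju hyjv hyjw hyu hyv hyw
            hxju hxjv hxjw hadj hxjyj.symm
          exact (hy1 (hyxj ▸ hxjt1)).elim
      -- Case A: v and w have a common neighbour in the remainder
      by_cases hA : ∃ m', m' ∈ remSet F₀ ∧ G.Adj v m' ∧ G.Adj w m'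
      · obtain ⟨m, hmR, hvm, hwm⟩ := hA
        have hcopy2 : G.IsK12Copy ({v, m, w} : Finset V) :=
          mk_copy G hvm.ne hvw hwm.ne' hvm.symm hwm.symm
        have hmu : m ≠ u := fun h => hauv ((h ▸ hvm).symm)
        have hmx₁ : m ≠ x₁ := fun h => hnvx₁ (h ▸ hvm)
        have hmx₂ : m ≠ x₂ := fun h => hnvx₂ (h ▸ hvm)
        by_cases hmy : m = y₁
        · exact leafA m hmR hcopy2 hmu hmx₁ hmx₂ x₂ y₂ hx₂Q hy₂Q hux₂ hx₂y₂ hvy₂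
            (by simp) (fun h => hy₂y₁ (h.trans hmy))
        · exact leafA m hmR hcopy2 hmu hmx₁ hmx₂ x₁ y₁ hx₁Q hy₁Q hux₁ hx₁y₁ hvy₁
            (by simp) (fun h => hmy h.symm)
      -- Case A2: the edge v-w
      by_cases hvwadj : G.Adj v w
      · have hcopy2 : G.IsK12Copy ({v, y₁, w} : Finset V) := by
          exact ⟨y₁, v, w, hy₁v, hy₁w, hvw, Finset.insert_comm v y₁ {w}, hvy₁, hvwadj⟩
        exact leafA y₁ hy₁R hcopy2 hy₁u hy₁x₁ hy₁x₂ x₂ y₂ hx₂Q hy₂Q hux₂ hx₂y₂ hvy₂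
          (by simp) hy₂y₁
      -- Case B: no common neighbour, no v-w edge
      have hNw : ∀ z, z ∈ remSet F₀ → G.Adj w z → z = d ∨ z = e := by
        intro z hzR hwz
        by_cases hzd : z = d
        · exact Or.inl hzd
        by_cases hze : z = e
        · exact Or.inr hze
        exfalso
        have hzu : z ≠ u := by rintro rfl; exact hauw hwz.symm
        have hzv : z ≠ v := by rintro rfl; exact hvwadj hwz.symm
        have hzQ : z ∈ Qf := hQin z hzR hzu hzv hwz.ne' hzd hze
        rcases θ1 z hzQ with h | h
        · exact hcuw z h hwz
        · exact hA ⟨z, hzR, h, hwz⟩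
      have hdQ : ∀ z ∈ Qf, ¬ G.Adj d z ∧ ¬ G.Adj e z := by
        intro z hz
        obtain ⟨hzR, hzu, hzv, hzw, hzd, hze⟩ := hQel z hz
        have key2 : ∀ q, q ∈ Qf → G.Adj z q → (¬ G.Adj z d ∧ ¬ G.Adj z e) := by
          intro q hqQ hzq
          obtain ⟨hqR, hqu, hqv, hqw, hqd, hqe⟩ := hQel q hqQ
          constructor
          · intro hzd'
            exact hqd (hmd1 z q d hzR hqR hdR hzu hzv hzw hqu hqv hqw hdu hdv hdw hzq hzd')
          · intro hze'
            exact hqe (hmd1 z q e hzR hqR heR hzu hzv hzw hqu hqv hqw heu hev hew hzq hze')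
        have hmate : ∃ q, q ∈ Qf ∧ G.Adj z q := by
          rcases θ1 z hz with h | h
          · obtain ⟨q, hqQ, hzq, -⟩ := θ2 z hz h
            exact ⟨q, hqQ, hzq⟩
          · obtain ⟨q, hqQ, hzq, -⟩ := θ2' z hz (fun hu => hcuv z hu h)
            exact ⟨q, hqQ, hzq⟩
        obtain ⟨q, hqQ, hzq⟩ := hmate
        obtain ⟨h1, h2⟩ := key2 q hqQ hzq
        exact ⟨fun h => h1 h.symm, fun h => h2 h.symm⟩
      have hnud : ¬ G.Adj u d := fun h => hcuw d h hwd
      by_cases hue2 : G.Adj u e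
      · -- Case B-I : e is attached to u
        by_cases hvd2 : G.Adj v d
        · -- B-I-1 : delete {y₁, v, d}, isolating w
          refine ⟨F₀ ∪ {({y₁, v, d} : Finset V)},
            mk_cut G F₀ _ hcop₀ hdisj₀ ?_ (by simp) ⟨_, Finset.mem_singleton_self _⟩
              {w} w u rfl (by simp [huw]) ?_ ?_ ?_⟩
          · intro s hs
            rw [Finset.mem_singleton] at hs
            subst hs
            refine ⟨mk_copy G hy₁v hy₁d hvd' hvy₁ hvd2, ?_⟩
            intro x hx
            rcases Finset.mem_insert.mp hx with rfl | hx
            · exact hy₁R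
            rcases Finset.mem_insert.mp hx with rfl | hx
            · exact hvR
            rw [Finset.mem_singleton] at hx
            exact hx ▸ hdR
          · rw [remSet_union]
            refine ⟨hwR, ?_⟩
            intro s hs
            rw [Finset.mem_singleton] at hs
            subst hs
            simp only [Finset.mem_insert, Finset.mem_singleton]
            push_neg
            exact ⟨Ne.symm hy₁w, Ne.symm hvw, Ne.symm hdw⟩
          · rw [remSet_union]
            refine ⟨huR, ?_⟩
            intro s hs
            rw [Finset.mem_singleton] at hs
            subst hs
            simp only [Finset.mem_insert, Finset.mem_singleton]
            push_neg
            exact ⟨Ne.symm hy₁u, huv, hud⟩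
          · intro x hx y hyR hadj
            rw [Set.mem_singleton_iff] at hx
            subst hx
            obtain ⟨hyF, hyT⟩ := remSet_union.mp hyR
            have hy1 : y ∉ ({y₁, v, d} : Finset V) := hyT _ (Finset.mem_singleton_self _)
            rcases hNw y hyF hadj with h | h
            · exact (hy1 (by simp [h])).elim
            · rw [h] at hadj
              exact (hcuw e hue2 hadj).elim
        · -- B-I-2 : delete {x₁, u, x₂}, isolating {w, d, e}
          refine ⟨F₀ ∪ {({x₁, u, x₂} : Finset V)},
            mk_cut G F₀ _ hcop₀ hdisj₀ ?_ (by simp) ⟨_, Finset.mem_singleton_self _⟩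
              {w, d, e} w v (by left; rfl) (by simp [hvw, hvd', hve']) ?_ ?_ ?_⟩
          · intro s hs
            rw [Finset.mem_singleton] at hs
            subst hs
            refine ⟨mk_copy G hx₁u hx₁x₂ (Ne.symm hx₂u) hux₁ hux₂, ?_⟩
            intro x hx
            rcases Finset.mem_insert.mp hx with rfl | hx
            · exact hx₁R
            rcases Finset.mem_insert.mp hx with rfl | hx
            · exact huR
            rw [Finset.mem_singleton] at hx
            exact hx ▸ hx₂R
          · rw [remSet_union]
            refine ⟨hwR, ?_⟩
            intro s hs
            rw [Finset.mem_singleton] at hs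
            subst hs
            simp only [Finset.mem_insert, Finset.mem_singleton]
            push_neg
            exact ⟨Ne.symm hx₁w, Ne.symm huw, Ne.symm hx₂w⟩
          · rw [remSet_union]
            refine ⟨hvR, ?_⟩
            intro s hs
            rw [Finset.mem_singleton] at hs
            subst hs
            simp only [Finset.mem_insert, Finset.mem_singleton]
            push_neg
            exact ⟨Ne.symm hx₁v, Ne.symm huv, Ne.symm hx₂v⟩
          · intro x hx y hyR hadj
            obtain ⟨hyF, hyT⟩ := remSet_union.mp hyR
            have hy1 : y ∉ ({x₁, u, x₂} : Finset V) := hyT _ (Finset.mem_singleton_self _)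
            have hyu : y ≠ u := by rintro rfl; exact hy1 (by simp)
            simp only [Set.mem_insert_iff, Set.mem_singleton_iff] at hx ⊢
            rcases hx with hxw | hxd | hxe
            · rw [hxw] at hadj
              rcases hNw y hyF hadj with h | h
              · exact Or.inr (Or.inl h)
              · exact Or.inr (Or.inr h)
            · -- x = d
              rw [hxd] at hadj
              by_cases hyv : y = v
              · exact (hvd2 (hyv ▸ hadj).symm).elim
              by_cases hyw : y = w
              · exact Or.inl hyw
              by_cases hyd : y = d
              · exact Or.inr (Or.inl hyd)
              by_cases hye : y = e
              · exact Or.inr (Or.inr hye)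
              · exact ((hdQ y (hQin y hyF hyu hyv hyw hyd hye)).1 hadj).elim
            · -- x = e
              rw [hxe] at hadj
              by_cases hyv : y = v
              · exact ((hcuv e hue2) ((hyv ▸ hadj).symm)).elim
              by_cases hyw : y = w
              · exact Or.inl hyw
              by_cases hyd : y = d
              · exact Or.inr (Or.inl hyd)
              by_cases hye : y = e
              · exact Or.inr (Or.inr hye)
              · exact ((hdQ y (hQin y hyF hyu hyv hyw hyd hye)).2 hadj).elim
      · -- Case B-II : delete {y₁, v, y₂}, isolating {w, d, e}
        refine ⟨F₀ ∪ {({y₁, v, y₂} : Finset V)},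
          mk_cut G F₀ _ hcop₀ hdisj₀ ?_ (by simp) ⟨_, Finset.mem_singleton_self _⟩
            {w, d, e} w u (by left; rfl) (by simp [huw, hud, hue']) ?_ ?_ ?_⟩
        · intro s hs
          rw [Finset.mem_singleton] at hs
          subst hs
          refine ⟨mk_copy G hy₁v (Ne.symm hy₂y₁) (Ne.symm hy₂v) hvy₁ hvy₂, ?_⟩
          intro x hx
          rcases Finset.mem_insert.mp hx with rfl | hx
          · exact hy₁R
          rcases Finset.mem_insert.mp hx with rfl | hx
          · exact hvR
          rw [Finset.mem_singleton] at hx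
          exact hx ▸ hy₂R
        · rw [remSet_union]
          refine ⟨hwR, ?_⟩
          intro s hs
          rw [Finset.mem_singleton] at hs
          subst hs
          simp only [Finset.mem_insert, Finset.mem_singleton]
          push_neg
          exact ⟨Ne.symm hy₁w, Ne.symm hvw, Ne.symm hy₂w⟩
        · rw [remSet_union]
          refine ⟨huR, ?_⟩
          intro s hs
          rw [Finset.mem_singleton] at hs
          subst hs
          simp only [Finset.mem_insert, Finset.mem_singleton]
          push_neg
          exact ⟨Ne.symm hy₁u, huv, Ne.symm hy₂u⟩
        · intro x hx y hyR hadj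
          obtain ⟨hyF, hyT⟩ := remSet_union.mp hyR
          have hy1 : y ∉ ({y₁, v, y₂} : Finset V) := hyT _ (Finset.mem_singleton_self _)
          have hyv : y ≠ v := by rintro rfl; exact hy1 (by simp)
          simp only [Set.mem_insert_iff, Set.mem_singleton_iff] at hx ⊢
          rcases hx with hxw | hxd | hxe
          · rw [hxw] at hadj
            rcases hNw y hyF hadj with h | h
            · exact Or.inr (Or.inl h)
            · exact Or.inr (Or.inr h)
          · -- x = d
            rw [hxd] at hadj
            by_cases hyu : y = u
            · exact (hnud (hyu ▸ hadj).symm).elim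
            by_cases hyw : y = w
            · exact Or.inl hyw
            by_cases hyd : y = d
            · exact Or.inr (Or.inl hyd)
            by_cases hye : y = e
            · exact Or.inr (Or.inr hye)
            · exact ((hdQ y (hQin y hyF hyu hyv hyw hyd hye)).1 hadj).elim
          · -- x = e
            rw [hxe] at hadj
            by_cases hyu : y = u
            · exact (hue2 (hyu ▸ hadj).symm).elim
            by_cases hyw : y = w
            · exact Or.inl hyw
            by_cases hyd : y = d
            · exact Or.inr (Or.inl hyd)
            by_cases hye : y = e
            · exact Or.inr (Or.inr hye)
            · exact ((hdQ y (hQin y hyF hyu hyv hyw hyd hye)).2 hadj).elim
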